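/- arXiv:1301.5697 — 5 statements merged into one kernel-verified Lean document; each statement's English description precedes it below -/
import Mathlib

section
/- Let m and n be positive integers divisible by 3. The oriented bipartite graph D*(m,n) with bipartition (M, N), where M = M0 ∪ M1 ∪ M2 with |Mi| = m/3, N = N0 ∪ N1 ∪ N2 with |Ni| = n/3, and arc set consisting of all arcs from Mi to Ni and all arcs from Ni to M(i+1 mod 3) for i = 0,1,2, contains no directed cycle of length 4. -/
open Finset

/-- The digraph given by arc relation `E` contains a directed cycle of length 4. -/
def HasDirC4 {V : Type*} (E : V → V → Prop) : Prop :=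
  ∃ a b c d : V, a ≠ b ∧ a ≠ c ∧ a ≠ d ∧ b ≠ c ∧ b ≠ d ∧ c ≠ d ∧
    E a b ∧ E b c ∧ E c d ∧ E d a

/-- Out-degree of a vertex in the digraph `E`. -/
def OutDeg {V : Type*} [Fintype V] (E : V → V → Prop) [DecidableRel E] (u : V) : ℕ :=
  (Finset.univ.filter fun w => E u w).card

/-- In-degree of a vertex in the digraph `E`. -/
def InDeg {V : Type*} [Fintype V] (E : V → V → Prop) [DecidableRel E] (u : V) : ℕ :=
  (Finset.univ.filter fun w => E w u).card

/-- `E` is the extremal digraph `D*(|A|,|B|)` on the bipartition `(A,B)`: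
the parts split into three equal blocks `M i`, `N i` with all arcs from
`M i` to `N i` and from `N i` to `M (i+1)`, indices mod 3. -/
def IsDStar {V : Type*} [DecidableEq V] (A B : Finset V) (E : V → V → Prop) : Prop :=
  ∃ M N : ZMod 3 → Finset V,
    (∀ i j, i ≠ j → Disjoint (M i) (M j)) ∧
    (∀ i j, i ≠ j → Disjoint (N i) (N j)) ∧
    M 0 ∪ M 1 ∪ M 2 = A ∧ N 0 ∪ N 1 ∪ N 2 = B ∧
    (∀ i, 3 * (M i).card = A.card) ∧ (∀ i, 3 * (N i).card = B.card) ∧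
    (∀ u v, E u v ↔ ∃ i, (u ∈ M i ∧ v ∈ N i) ∨ (u ∈ N i ∧ v ∈ M (i + 1)))

theorem DStar_has_no_directed_C4 {V : Type*} [DecidableEq V]
    (m n : ℕ) (hm : 0 < m) (hn : 0 < n) (hm3 : 3 ∣ m) (hn3 : 3 ∣ n)
    (M N : ZMod 3 → Finset V)
    (hMdisj : ∀ i j, i ≠ j → Disjoint (M i) (M j))
    (hNdisj : ∀ i j, i ≠ j → Disjoint (N i) (N j))
    (hMN : Disjoint (M 0 ∪ M 1 ∪ M 2) (N 0 ∪ N 1 ∪ N 2))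
    (hMcard : ∀ i, (M i).card = m / 3) (hNcard : ∀ i, (N i).card = n / 3)
    (E : V → V → Prop)
    (hE : ∀ u v, E u v ↔ ∃ i, (u ∈ M i ∧ v ∈ N i) ∨ (u ∈ N i ∧ v ∈ M (i + 1))) :
    ¬ HasDirC4 E := by
  rintro ⟨a, b, c, d, hab, hac, had, hbc, hbd, hcd, e1, e2, e3, e4⟩
  have htri : ∀ i : ZMod 3, i = 0 ∨ i = 1 ∨ i = 2 := by decide
  have hMN' : ∀ (i j : ZMod 3) (x : V), x ∈ M i → x ∈ N j → False := by
    intro i j x hx hy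
    have hxM : x ∈ M 0 ∪ M 1 ∪ M 2 := by
      rcases htri i with h | h | h <;> subst h <;> simp [Finset.mem_union, hx]
    have hxN : x ∈ N 0 ∪ N 1 ∪ N 2 := by
      rcases htri j with h | h | h <;> subst h <;> simp [Finset.mem_union, hy]
    exact Finset.disjoint_left.mp hMN hxM hxN
  have step : ∀ u v, E u v → ∀ i : ZMod 3,
      (u ∈ M i → v ∈ N i) ∧ (u ∈ N i → v ∈ M (i + 1)) := by
    intro u v huv i
    obtain ⟨j, hj⟩ := (hE u v).mp huv
    constructor
    · intro hu
      rcases hj with ⟨hu', hv'⟩ | ⟨hu', hv'⟩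
      · by_cases hij : i = j
        · subst hij; exact hv'
        · exact absurd hu' (Finset.disjoint_left.mp (hMdisj i j hij) hu)
      · exact absurd hu' (fun h => hMN' i j u hu h)
    · intro hu
      rcases hj with ⟨hu', hv'⟩ | ⟨hu', hv'⟩
      · exact absurd hu (fun h => hMN' j i u hu' h)
      · by_cases hij : i = j
        · subst hij; exact hv'
        · exact absurd hu' (Finset.disjoint_left.mp (hNdisj i j hij) hu)
  obtain ⟨i, hi⟩ := (hE a b).mp e1
  have hne : ∀ i : ZMod 3, i ≠ i + 2 := by decide
  rcases hi with ⟨ha, hb⟩ | ⟨ha, hb⟩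
  · have hc : c ∈ M (i + 1) := (step b c e2 i).2 hb
    have hd : d ∈ N (i + 1) := (step c d e3 (i + 1)).1 hc
    have ha' : a ∈ M (i + 1 + 1) := (step d a e4 (i + 1)).2 hd
    have : a ∈ M (i + 2) := by rwa [show i + 1 + 1 = i + 2 by ring] at ha'
    exact Finset.disjoint_left.mp (hMdisj i (i + 2) (hne i)) ha this
  · have hc : c ∈ N (i + 1) := (step b c e2 (i + 1)).1 hb
    have hd : d ∈ M (i + 1 + 1) := (step c d e3 (i + 1)).2 hc
    have ha' : a ∈ N (i + 1 + 1) := (step d a e4 (i + 1 + 1)).1 hd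
    have : a ∈ N (i + 2) := by rwa [show i + 1 + 1 = i + 2 by ring] at ha'
    exact Finset.disjoint_left.mp (hNdisj i (i + 2) (hne i)) ha this
end

section
/- Let D be an oriented bipartite graph with parts A (|A| = 3m1) and B (|B| = 3n1), m1, n1 ≥ 1, in which every vertex of A has out-degree exactly n1 and every vertex of B has out-degree exactly m1. If D has no directed C4, then every vertex of A also has in-degree exactly n1 and every vertex of B has in-degree exactly m1 (i.e., D is Eulerian at every vertex). -/
open Finset

section Aux

variable {V : Type*} [Fintype V] [DecidableEq V]

private lemma outdeg_eq_sum (E : V → V → Prop) [DecidableRel E] (u : V) :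
    OutDeg E u = ∑ b : V, if E u b then 1 else 0 :=
  Finset.card_filter _ _

private lemma indeg_eq_sum (E : V → V → Prop) [DecidableRel E] (u : V) :
    InDeg E u = ∑ b : V, if E b u then 1 else 0 :=
  Finset.card_filter _ _

lemma aux_indeg (A B : Finset V) (E : V → V → Prop) [DecidableRel E]
    (m1 n1 : ℕ)
    (hAcard : A.card = 3 * m1) (hBcard : B.card = 3 * n1)
    (hdisj : Disjoint A B)
    (hbip : ∀ u v, E u v → (u ∈ A ∧ v ∈ B) ∨ (u ∈ B ∧ v ∈ A))
    (horient : ∀ u v, E u v → ¬ E v u)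
    (houtA : ∀ u ∈ A, OutDeg E u = n1)
    (houtB : ∀ v ∈ B, OutDeg E v = m1)
    (hnoC4 : ¬ HasDirC4 E) :
    ∀ v ∈ B, InDeg E v = m1 := by
  classical
  -- membership helpers
  have htoB : ∀ a ∈ A, ∀ b, E a b → b ∈ B := by
    intro a ha b h
    rcases hbip a b h with ⟨_, hb⟩ | ⟨ha', _⟩
    · exact hb
    · exact absurd ha' (Finset.disjoint_left.mp hdisj ha)
  have htoA : ∀ b ∈ B, ∀ a, E b a → a ∈ A := by
    intro b hb a h
    rcases hbip b a h with ⟨hb', _⟩ | ⟨_, ha⟩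
    · exact absurd hb (Finset.disjoint_left.mp hdisj hb')
    · exact ha
  have hABne : ∀ x ∈ A, ∀ y ∈ B, x ≠ y := by
    intro x hx y hy hxy
    exact Finset.disjoint_left.mp hdisj hx (hxy ▸ hy)
  -- F b = number of in-neighbours of b inside A, G b = number of out-neighbours inside A
  set F : V → ℕ := fun b => ∑ a ∈ A, if E a b then 1 else 0 with hF
  set G : V → ℕ := fun b => ∑ a ∈ A, if E b a then 1 else 0 with hG
  have hFzero : ∀ b, b ∉ B → F b = 0 := by
    intro b hb
    refine Finset.sum_eq_zero ?_
    intro a ha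
    have : ¬ E a b := fun h => hb (htoB a ha b h)
    simp [this]
  have hGB : ∀ b ∈ B, G b = m1 := by
    intro b hb
    have : G b = OutDeg E b := by
      rw [outdeg_eq_sum, hG]
      exact Finset.sum_subset A.subset_univ (by
        intro x _ hx
        have : ¬ E b x := fun h => hx (htoA b hb x h)
        simp [this])
    rw [this, houtB b hb]
  have hFB : ∀ b ∈ B, F b = InDeg E b := by
    intro b hb
    rw [indeg_eq_sum, hF]
    exact Finset.sum_subset A.subset_univ (by
      intro x _ hx
      have : ¬ E x b := by
        intro h
        rcases hbip x b h with ⟨hx', _⟩ | ⟨_, hb'⟩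
        · exact hx hx'
        · exact Finset.disjoint_left.mp hdisj hb' hb
      simp [this])
  -- total number of arcs from A to B
  have hFsum : ∑ b : V, F b = 3 * m1 * n1 := by
    rw [hF, Finset.sum_comm]
    have : ∀ a ∈ A, (∑ b : V, if E a b then 1 else 0) = n1 := by
      intro a ha
      rw [← outdeg_eq_sum]
      exact houtA a ha
    rw [Finset.sum_congr rfl this, Finset.sum_const, smul_eq_mul, hAcard]
  -- key local inequality for each pair (a, a') of vertices of A
  have hpair : ∀ a ∈ A, ∀ a' ∈ A,
      ((∑ b : V, if E a b ∧ E b a' then 1 else 0) +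
       (∑ b : V, if E a' b ∧ E b a then 1 else 0) +
       (∑ b : V, if E a b ∧ E a' b then 1 else 0)) ≤ n1 := by
    intro a ha a' ha'
    by_cases hg : ∃ b, E a b ∧ E b a'
    · -- there is a 2-path a → a'; then no 2-path a' → a, by C4-freeness
      have hno : ∀ b', ¬ (E a' b' ∧ E b' a) := by
        rintro b' ⟨h1, h2⟩
        obtain ⟨b, hb1, hb2⟩ := hg
        have hbB : b ∈ B := htoB a ha b hb1
        have hb'B : b' ∈ B := htoB a' ha' b' h1
        have haa' : a ≠ a' := by
          rintro rfl
          exact horient _ _ hb1 hb2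
        have hbb' : b ≠ b' := by
          rintro rfl
          exact horient _ _ hb1 h2
        exact hnoC4 ⟨a, b, a', b', hABne a ha b hbB, haa', hABne a ha b' hb'B,
          (hABne a' ha' b hbB).symm, hbb', hABne a' ha' b' hb'B, hb1, hb2, h1, h2⟩
      have key : ∀ b : V,
          ((if E a b ∧ E b a' then 1 else 0) + (if E a' b ∧ E b a then 1 else 0) +
            (if E a b ∧ E a' b then 1 else 0)) ≤ (if E a b then (1:ℕ) else 0) := by
        intro b
        have h2 : ¬ (E a' b ∧ E b a) := hno b
        by_cases h1 : E a b
        · by_cases h3 : E b a'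
          · have h4 : ¬ E a' b := fun h => horient _ _ h h3
            simp [h1, h3, h4, h2]
          · simp only [h1, h3, and_false, true_and, if_false, if_true, h2]
            split_ifs <;> omega
        · simp [h1, h2]
      calc ((∑ b : V, if E a b ∧ E b a' then 1 else 0) +
             (∑ b : V, if E a' b ∧ E b a then 1 else 0) +
             (∑ b : V, if E a b ∧ E a' b then 1 else 0))
          = ∑ b : V, ((if E a b ∧ E b a' then 1 else 0) + (if E a' b ∧ E b a then 1 else 0) +
              (if E a b ∧ E a' b then 1 else 0)) := by
            rw [Finset.sum_add_distrib, Finset.sum_add_distrib]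
        _ ≤ ∑ b : V, (if E a b then 1 else 0) := Finset.sum_le_sum fun b _ => key b
        _ = OutDeg E a := (outdeg_eq_sum E a).symm
        _ = n1 := houtA a ha
    · -- no 2-path a → a'
      have hno : ∀ b, ¬ (E a b ∧ E b a') := by
        push_neg at hg
        intro b hb
        exact hg b hb.1 hb.2
      have key : ∀ b : V,
          ((if E a b ∧ E b a' then 1 else 0) + (if E a' b ∧ E b a then 1 else 0) +
            (if E a b ∧ E a' b then 1 else 0)) ≤ (if E a' b then (1:ℕ) else 0) := by
        intro b
        have h1 : ¬ (E a b ∧ E b a') := hno b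
        by_cases h4 : E a' b
        · have h5 : ¬ E b a' := horient _ _ h4
          by_cases h6 : E b a
          · have h7 : ¬ E a b := fun h => horient _ _ h h6
            simp [h1, h4, h5, h6, h7]
          · simp only [h1, h4, h6, and_false, true_and, if_false, if_true]
            split_ifs <;> omega
        · simp [h1, h4]
      calc ((∑ b : V, if E a b ∧ E b a' then 1 else 0) +
             (∑ b : V, if E a' b ∧ E b a then 1 else 0) +
             (∑ b : V, if E a b ∧ E a' b then 1 else 0))
          = ∑ b : V, ((if E a b ∧ E b a' then 1 else 0) + (if E a' b ∧ E b a then 1 else 0) +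
              (if E a b ∧ E a' b then 1 else 0)) := by
            rw [Finset.sum_add_distrib, Finset.sum_add_distrib]
        _ ≤ ∑ b : V, (if E a' b then 1 else 0) := Finset.sum_le_sum fun b _ => key b
        _ = OutDeg E a' := (outdeg_eq_sum E a').symm
        _ = n1 := houtA a' ha'
  -- sum the local inequality over all ordered pairs
  have hmain : (∑ a ∈ A, ∑ a' ∈ A,
      ((∑ b : V, if E a b ∧ E b a' then 1 else 0) +
       (∑ b : V, if E a' b ∧ E b a then 1 else 0) +
       (∑ b : V, if E a b ∧ E a' b then 1 else 0))) ≤ A.card * A.card * n1 := by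
    calc (∑ a ∈ A, ∑ a' ∈ A,
        ((∑ b : V, if E a b ∧ E b a' then 1 else 0) +
         (∑ b : V, if E a' b ∧ E b a then 1 else 0) +
         (∑ b : V, if E a b ∧ E a' b then 1 else 0)))
        ≤ ∑ _a ∈ A, ∑ _a' ∈ A, n1 := by
          refine Finset.sum_le_sum fun a ha => Finset.sum_le_sum fun a' ha' => ?_
          exact hpair a ha a' ha'
      _ = A.card * A.card * n1 := by
          simp [Finset.sum_const, smul_eq_mul, mul_assoc]
  -- identify the three double sums
  have hfact1 : ∀ b : V, ∀ a ∈ A, (∑ a' ∈ A, if E a b ∧ E b a' then (1:ℕ) else 0)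
      = (if E a b then (1:ℕ) else 0) * G b := by
    intro b a _
    by_cases h : E a b
    · simp [h, hG]
    · simp [h]
  have hT1 : (∑ a ∈ A, ∑ a' ∈ A, ∑ b : V, if E a b ∧ E b a' then (1:ℕ) else 0)
      = ∑ b : V, F b * G b := by
    rw [Finset.sum_congr rfl fun a _ => Finset.sum_comm, Finset.sum_comm]
    refine Finset.sum_congr rfl fun b _ => ?_
    rw [Finset.sum_congr rfl (hfact1 b), ← Finset.sum_mul, hF]
  have hfact3 : ∀ b : V, ∀ a ∈ A, (∑ a' ∈ A, if E a b ∧ E a' b then (1:ℕ) else 0)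
      = (if E a b then (1:ℕ) else 0) * F b := by
    intro b a _
    by_cases h : E a b
    · simp [h, hF]
    · simp [h]
  have hT3 : (∑ a ∈ A, ∑ a' ∈ A, ∑ b : V, if E a b ∧ E a' b then (1:ℕ) else 0)
      = ∑ b : V, F b * F b := by
    rw [Finset.sum_congr rfl fun a _ => Finset.sum_comm, Finset.sum_comm]
    refine Finset.sum_congr rfl fun b _ => ?_
    rw [Finset.sum_congr rfl (hfact3 b), ← Finset.sum_mul, hF]
  have hT2 : (∑ a ∈ A, ∑ a' ∈ A, ∑ b : V, if E a' b ∧ E b a then (1:ℕ) else 0)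
      = ∑ b : V, F b * G b := by
    rw [Finset.sum_comm]
    exact hT1
  -- value of the first double sum
  have hT1val : (∑ b : V, F b * G b) = m1 * (3 * m1 * n1) := by
    have : ∀ b : V, F b * G b = m1 * F b := by
      intro b
      by_cases hb : b ∈ B
      · rw [hGB b hb, mul_comm]
      · rw [hFzero b hb]
        ring
    rw [Finset.sum_congr rfl fun b _ => this b, ← Finset.mul_sum, hFsum]
  -- conclude the bound on the sum of squares
  have hsq : (∑ b : V, F b * F b) ≤ 3 * (m1 * m1) * n1 := by
    have hsplit : (∑ a ∈ A, ∑ a' ∈ A,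
        ((∑ b : V, if E a b ∧ E b a' then 1 else 0) +
         (∑ b : V, if E a' b ∧ E b a then 1 else 0) +
         (∑ b : V, if E a b ∧ E a' b then 1 else 0)))
        = (∑ b : V, F b * G b) + (∑ b : V, F b * G b) + (∑ b : V, F b * F b) := by
      have : (∑ a ∈ A, ∑ a' ∈ A,
          ((∑ b : V, if E a b ∧ E b a' then 1 else 0) +
           (∑ b : V, if E a' b ∧ E b a then 1 else 0) +
           (∑ b : V, if E a b ∧ E a' b then 1 else 0)))
          = (∑ a ∈ A, ∑ a' ∈ A, ∑ b : V, if E a b ∧ E b a' then (1:ℕ) else 0) +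
            (∑ a ∈ A, ∑ a' ∈ A, ∑ b : V, if E a' b ∧ E b a then (1:ℕ) else 0) +
            (∑ a ∈ A, ∑ a' ∈ A, ∑ b : V, if E a b ∧ E a' b then (1:ℕ) else 0) := by
        simp [Finset.sum_add_distrib]
      rw [this, hT1, hT2, hT3]
    rw [hsplit, hT1val, hAcard] at hmain
    have h1 : m1 * (3 * m1 * n1) = 3 * (m1 * m1 * n1) := by ring
    have h2 : 3 * m1 * (3 * m1) * n1 = 9 * (m1 * m1 * n1) := by ring
    have h3 : 3 * (m1 * m1) * n1 = 3 * (m1 * m1 * n1) := by ring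
    omega
  -- restrict to B
  have hXB : (∑ b ∈ B, InDeg E b * InDeg E b) ≤ 3 * (m1 * m1) * n1 := by
    calc (∑ b ∈ B, InDeg E b * InDeg E b) = ∑ b ∈ B, F b * F b :=
          Finset.sum_congr rfl fun b hb => by rw [hFB b hb]
      _ ≤ ∑ b : V, F b * F b := Finset.sum_le_sum_of_subset B.subset_univ
      _ ≤ 3 * (m1 * m1) * n1 := hsq
  have hSB : (∑ b ∈ B, InDeg E b) = 3 * m1 * n1 := by
    have : (∑ b ∈ B, F b) = ∑ b : V, F b := by
      refine Finset.sum_subset B.subset_univ ?_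
      intro x _ hx
      exact hFzero x hx
    calc (∑ b ∈ B, InDeg E b) = ∑ b ∈ B, F b :=
          Finset.sum_congr rfl fun b hb => (hFB b hb).symm
      _ = ∑ b : V, F b := this
      _ = 3 * m1 * n1 := hFsum
  -- variance argument over ℤ
  have hvar : ∑ b ∈ B, ((InDeg E b : ℤ) - m1) * ((InDeg E b : ℤ) - m1) ≤ 0 := by
    have expand : ∀ b ∈ B, ((InDeg E b : ℤ) - m1) * ((InDeg E b : ℤ) - m1)
        = (InDeg E b : ℤ) * (InDeg E b : ℤ) - 2 * m1 * (InDeg E b : ℤ) + m1 * m1 := by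
      intros; ring
    rw [Finset.sum_congr rfl expand, Finset.sum_add_distrib, Finset.sum_sub_distrib,
      ← Finset.mul_sum, Finset.sum_const, nsmul_eq_mul, hBcard]
    have c1 : (∑ b ∈ B, (InDeg E b : ℤ) * (InDeg E b : ℤ)) ≤ 3 * (m1 * m1) * n1 := by
      have := hXB
      calc (∑ b ∈ B, (InDeg E b : ℤ) * (InDeg E b : ℤ))
          = ((∑ b ∈ B, InDeg E b * InDeg E b : ℕ) : ℤ) := by push_cast; ring
        _ ≤ ((3 * (m1 * m1) * n1 : ℕ) : ℤ) := by exact_mod_cast hXB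
        _ = 3 * (m1 * m1) * n1 := by push_cast; ring
    have c2 : (∑ b ∈ B, (InDeg E b : ℤ)) = 3 * m1 * n1 := by
      calc (∑ b ∈ B, (InDeg E b : ℤ)) = ((∑ b ∈ B, InDeg E b : ℕ) : ℤ) := by push_cast; ring
        _ = 3 * m1 * n1 := by rw [hSB]; push_cast; ring
    rw [c2]
    push_cast
    push_cast at c1
    nlinarith [c1]
  have hzero : ∀ b ∈ B, ((InDeg E b : ℤ) - m1) * ((InDeg E b : ℤ) - m1) = 0 := by
    have hnn : ∀ b ∈ B, (0:ℤ) ≤ ((InDeg E b : ℤ) - m1) * ((InDeg E b : ℤ) - m1) :=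
      fun b _ => mul_self_nonneg _
    have := le_antisymm hvar (Finset.sum_nonneg hnn)
    exact (Finset.sum_eq_zero_iff_of_nonneg hnn).mp this
  intro v hv
  have h := hzero v hv
  have : (InDeg E v : ℤ) - m1 = 0 := by
    exact mul_self_eq_zero.mp h
  have : (InDeg E v : ℤ) = m1 := by linarith
  exact_mod_cast this

end Aux

theorem indegrees_of_C4_free_regular_oriented_bipartite {V : Type*} [Fintype V] [DecidableEq V]
    (A B : Finset V) (E : V → V → Prop) [DecidableRel E]
    (m1 n1 : ℕ) (hm1 : 1 ≤ m1) (hn1 : 1 ≤ n1)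
    (hAcard : A.card = 3 * m1) (hBcard : B.card = 3 * n1)
    (hdisj : Disjoint A B) (hcover : A ∪ B = Finset.univ)
    (hbip : ∀ u v, E u v → (u ∈ A ∧ v ∈ B) ∨ (u ∈ B ∧ v ∈ A))
    (horient : ∀ u v, E u v → ¬ E v u)
    (houtA : ∀ u ∈ A, OutDeg E u = n1)
    (houtB : ∀ v ∈ B, OutDeg E v = m1)
    (hnoC4 : ¬ HasDirC4 E) :
    (∀ u ∈ A, InDeg E u = n1) ∧ (∀ v ∈ B, InDeg E v = m1) := by
  constructor
  · exact aux_indeg B A E n1 m1 hBcard hAcard hdisj.symm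
      (fun u v h => (hbip u v h).symm) horient houtB houtA hnoC4
  · exact aux_indeg A B E m1 n1 hAcard hBcard hdisj hbip horient houtA houtB hnoC4
end

section
/- Let D be an oriented bipartite graph with bipartition (A,B) having no directed C4. Suppose k1 is the maximum in-degree over A, k2 is the maximum in-degree over B, every vertex of A has out-degree at least n1 and every vertex of B has out-degree at least m1. Fix u0 ∈ A with in-degree k1, set B1 = N^-(u0), B2 a set of n1 out-neighbors of u0, A3 = N^+(B2), B3 = N^+(A3) \ B2. Then |B3| ≥ m1·n1 / k2, and consequently |B| ≥ k1 + n1 + m1·n1/k2. -/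
open Finset

theorem B3_lower_bound {V : Type*} [Fintype V] [DecidableEq V]
    (A B : Finset V) (E : V → V → Prop) [DecidableRel E]
    (hdisj : Disjoint A B) (hcover : A ∪ B = Finset.univ)
    (hbip : ∀ u v, E u v → (u ∈ A ∧ v ∈ B) ∨ (u ∈ B ∧ v ∈ A))
    (horient : ∀ u v, E u v → ¬ E v u)
    (hnoC4 : ¬ HasDirC4 E)
    (k1 k2 m1 n1 : ℕ)
    (hk1max : ∀ u ∈ A, InDeg E u ≤ k1)
    (hk2max : ∀ v ∈ B, InDeg E v ≤ k2)
    (houtA : ∀ u ∈ A, n1 ≤ OutDeg E u)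
    (houtB : ∀ v ∈ B, m1 ≤ OutDeg E v)
    (u0 : V) (hu0 : u0 ∈ A) (hu0deg : InDeg E u0 = k1)
    (B1 B2 A3 B3 : Finset V)
    (hB1 : B1 = Finset.univ.filter fun v => E v u0)
    (hB2 : B2 ⊆ Finset.univ.filter fun v => E u0 v) (hB2card : B2.card = n1)
    (hA3 : A3 = Finset.univ.filter fun w => ∃ v ∈ B2, E v w)
    (hB3 : B3 = (Finset.univ.filter fun z => ∃ w ∈ A3, E w z) \ B2) :
    m1 * n1 ≤ k2 * B3.card ∧ k2 * (k1 + n1) + m1 * n1 ≤ k2 * B.card := by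

  have hirr : ∀ u, ¬ E u u := fun u h => horient u u h h
  -- membership facts
  have hB2E : ∀ v ∈ B2, E u0 v := fun v hv => (mem_filter.mp (hB2 hv)).2
  have hB2B : ∀ v ∈ B2, v ∈ B := by
    intro v hv
    rcases hbip u0 v (hB2E v hv) with ⟨_, hvB⟩ | ⟨hu0B, _⟩
    · exact hvB
    · exact absurd hu0B (Finset.disjoint_left.mp hdisj hu0)
  have hA3A : ∀ w ∈ A3, w ∈ A := by
    intro w hw
    rw [hA3, mem_filter] at hw
    obtain ⟨-, v, hv, hvw⟩ := hw
    rcases hbip v w hvw with ⟨hvA, _⟩ | ⟨_, hwA⟩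
    · exact absurd (hB2B v hv) (Finset.disjoint_left.mp hdisj hvA)
    · exact hwA
  have hB3B : ∀ z ∈ B3, z ∈ B := by
    intro z hz
    rw [hB3, mem_sdiff, mem_filter] at hz
    obtain ⟨⟨-, w, hw, hwz⟩, -⟩ := hz
    rcases hbip w z hwz with ⟨_, hzB⟩ | ⟨hwB, _⟩
    · exact hzB
    · exact absurd hwB (Finset.disjoint_left.mp hdisj (hA3A w hw))
  have hB1B : ∀ v ∈ B1, v ∈ B := by
    intro v hv
    rw [hB1, mem_filter] at hv
    rcases hbip v u0 hv.2 with ⟨hvA, hu0B⟩ | ⟨hvB, _⟩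
    · exact absurd hu0B (Finset.disjoint_left.mp hdisj hu0)
    · exact hvB
  -- main counting chain
  have step1 : m1 * n1 ≤ ∑ v ∈ B2, OutDeg E v := by
    calc m1 * n1 = ∑ _v ∈ B2, m1 := by
          rw [Finset.sum_const, hB2card, smul_eq_mul, mul_comm]
      _ ≤ _ := Finset.sum_le_sum fun v hv => houtB v (hB2B v hv)
  have step2 : ∑ v ∈ B2, OutDeg E v
      = ∑ v ∈ B2, (A3.filter fun w => E v w).card := by
    refine Finset.sum_congr rfl fun v hv => ?_
    unfold OutDeg
    congr 1
    ext w
    simp only [mem_filter, mem_univ, true_and, hA3]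
    exact ⟨fun h => ⟨⟨v, hv, h⟩, h⟩, fun h => h.2⟩
  have step3 : ∑ v ∈ B2, (A3.filter fun w => E v w).card
      = ∑ w ∈ A3, (B2.filter fun v => E v w).card := by
    simp_rw [Finset.card_filter]
    exact Finset.sum_comm
  have step4 : ∀ w ∈ A3, (B2.filter fun v => E v w).card
      ≤ (B3.filter fun z => E w z).card := by
    intro w hw
    set X := Finset.univ.filter fun z => E w z with hX
    have hX1 : n1 ≤ X.card := houtA w (hA3A w hw)
    have hdis : Disjoint (B2.filter fun v => E v w) (B2.filter fun v => E w v) := by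
      rw [Finset.disjoint_left]
      intro v h1 h2
      exact horient v w (mem_filter.mp h1).2 (mem_filter.mp h2).2
    have hsub : (B2.filter fun v => E v w) ∪ (B2.filter fun v => E w v) ⊆ B2 :=
      Finset.union_subset (Finset.filter_subset _ _) (Finset.filter_subset _ _)
    have hcards : (B2.filter fun v => E v w).card + (B2.filter fun v => E w v).card ≤ n1 := by
      rw [← Finset.card_union_of_disjoint hdis, ← hB2card]
      exact Finset.card_le_card hsub
    have hinter : X ∩ B2 = B2.filter fun v => E w v := by
      ext v; simp [hX, and_comm]
    have hsplit : (X \ B2).card + (B2.filter fun v => E w v).card = X.card := by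
      rw [← hinter]; exact Finset.card_sdiff_add_card_inter X B2
    have hXB3 : X \ B2 ⊆ B3.filter fun z => E w z := by
      intro z hz
      rw [Finset.mem_sdiff, hX, mem_filter] at hz
      obtain ⟨⟨-, hwz⟩, hzB2⟩ := hz
      rw [mem_filter, hB3, mem_sdiff, mem_filter]
      exact ⟨⟨⟨mem_univ z, w, hw, hwz⟩, hzB2⟩, hwz⟩
    have := Finset.card_le_card hXB3
    omega
  have step5 : ∑ w ∈ A3, (B3.filter fun z => E w z).card
      = ∑ z ∈ B3, (A3.filter fun w => E w z).card := by
    simp_rw [Finset.card_filter]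
    exact Finset.sum_comm
  have step6 : ∑ z ∈ B3, (A3.filter fun w => E w z).card ≤ k2 * B3.card := by
    calc ∑ z ∈ B3, (A3.filter fun w => E w z).card
        ≤ ∑ z ∈ B3, k2 := by
          refine Finset.sum_le_sum fun z hz => ?_
          refine le_trans (Finset.card_le_card ?_) (hk2max z (hB3B z hz))
          exact Finset.filter_subset_filter _ (Finset.subset_univ A3)
      _ = k2 * B3.card := by rw [Finset.sum_const, smul_eq_mul, mul_comm]
  have main : m1 * n1 ≤ k2 * B3.card := by
    calc m1 * n1 ≤ ∑ v ∈ B2, OutDeg E v := step1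
      _ = ∑ w ∈ A3, (B2.filter fun v => E v w).card := by rw [step2, step3]
      _ ≤ ∑ w ∈ A3, (B3.filter fun z => E w z).card := Finset.sum_le_sum step4
      _ = ∑ z ∈ B3, (A3.filter fun w => E w z).card := step5
      _ ≤ k2 * B3.card := step6
  refine ⟨main, ?_⟩
  -- disjointness of B1, B2, B3 inside B
  have hB1card : B1.card = k1 := by rw [hB1, ← hu0deg]; rfl
  have hd12 : Disjoint B1 B2 := by
    rw [Finset.disjoint_left]
    intro v h1 h2
    rw [hB1, mem_filter] at h1
    exact horient u0 v (hB2E v h2) h1.2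
  have hd23 : Disjoint B2 B3 := by
    rw [hB3]
    exact Finset.disjoint_sdiff
  have hd13 : Disjoint B1 B3 := by
    rw [Finset.disjoint_left]
    intro z h1 h3
    rw [hB1, mem_filter] at h1
    have hzu0 : E z u0 := h1.2
    rw [hB3, mem_sdiff, mem_filter] at h3
    obtain ⟨⟨-, w, hw, hwz⟩, hzB2⟩ := h3
    have hwA3 := hw
    rw [hA3, mem_filter] at hw
    obtain ⟨-, v, hv, hvw⟩ := hw
    have hu0v : E u0 v := hB2E v hv
    refine hnoC4 ⟨u0, v, w, z, ?_, ?_, ?_, ?_, ?_, ?_, hu0v, hvw, hwz, hzu0⟩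
    · rintro rfl; exact hirr u0 hu0v
    · rintro rfl; exact horient u0 v hu0v hvw
    · rintro rfl; exact hirr u0 hzu0
    · rintro rfl; exact hirr v hvw
    · rintro rfl; exact hzB2 hv
    · rintro rfl; exact hirr w hwz
  have hsubB : B1 ∪ B2 ∪ B3 ⊆ B := by
    intro x hx
    rcases Finset.mem_union.mp hx with hx | hx
    · rcases Finset.mem_union.mp hx with hx | hx
      · exact hB1B x hx
      · exact hB2B x hx
    · exact hB3B x hx
  have hcardB : k1 + n1 + B3.card ≤ B.card := by
    have h1 : (B1 ∪ B2 ∪ B3).card = k1 + n1 + B3.card := by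
      rw [Finset.card_union_of_disjoint, Finset.card_union_of_disjoint hd12,
        hB1card, hB2card]
      exact Finset.disjoint_union_left.mpr ⟨hd13, hd23⟩
    rw [← h1]
    exact Finset.card_le_card hsubB
  calc k2 * (k1 + n1) + m1 * n1 ≤ k2 * (k1 + n1) + k2 * B3.card := by omega
    _ = k2 * (k1 + n1 + B3.card) := by ring
    _ ≤ k2 * B.card := Nat.mul_le_mul_left k2 hcardB
end

section
/- Reduction lemma: Suppose the statement 'every oriented bipartite graph with parts of sizes m, n (both divisible by 3, both ≥ 3) in which A-vertices have out-degree ≥ n/3 and B-vertices have out-degree ≥ m/3 either has a directed C4 or equals D*(m,n)' holds. Then for arbitrary m', n' ≥ 2 (not both divisible by 3), every oriented bipartite graph with parts of sizes m', n' satisfying out-degree ≥ n'/3 on A and ≥ m'/3 on B contains a directed C4. -/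
open Finset

def ExtE {V : Type} (A B : Finset V) (E : V → V → Prop) {s1 s2 : ℕ} :
    (V ⊕ (Fin s1 ⊕ Fin s2)) → (V ⊕ (Fin s1 ⊕ Fin s2)) → Prop
  | .inl u, .inl v => E u v
  | .inr (.inl _), .inl v => v ∈ B
  | .inr (.inr _), .inl u => u ∈ A
  | _, _ => False

instance ExtE.dec {V : Type} [DecidableEq V] (A B : Finset V) (E : V → V → Prop)
    [DecidableRel E] {s1 s2 : ℕ} : DecidableRel (ExtE A B E (s1 := s1) (s2 := s2)) :=
  fun x y =>
  match x, y with
  | .inl u, .inl v => inferInstanceAs (Decidable (E u v))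
  | .inl _, .inr _ => inferInstanceAs (Decidable False)
  | .inr (.inl _), .inl v => inferInstanceAs (Decidable (v ∈ B))
  | .inr (.inl _), .inr _ => inferInstanceAs (Decidable False)
  | .inr (.inr _), .inl u => inferInstanceAs (Decidable (u ∈ A))
  | .inr (.inr _), .inr _ => inferInstanceAs (Decidable False)

@[simp] lemma extE_inl_inl {V : Type} (A B : Finset V) (E : V → V → Prop) {s1 s2 : ℕ}
    (u v : V) : ExtE A B E (s1 := s1) (s2 := s2) (.inl u) (.inl v) ↔ E u v := Iff.rfl
@[simp] lemma extE_newA {V : Type} (A B : Finset V) (E : V → V → Prop) {s1 s2 : ℕ}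
    (i : Fin s1) (v : V) :
    ExtE A B E (s1 := s1) (s2 := s2) (.inr (.inl i)) (.inl v) ↔ v ∈ B := Iff.rfl
@[simp] lemma extE_newB {V : Type} (A B : Finset V) (E : V → V → Prop) {s1 s2 : ℕ}
    (j : Fin s2) (u : V) :
    ExtE A B E (s1 := s1) (s2 := s2) (.inr (.inr j)) (.inl u) ↔ u ∈ A := Iff.rfl
@[simp] lemma extE_to_inr {V : Type} (A B : Finset V) (E : V → V → Prop) {s1 s2 : ℕ}
    (x : V ⊕ (Fin s1 ⊕ Fin s2)) (y : Fin s1 ⊕ Fin s2) :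
    ¬ ExtE A B E (s1 := s1) (s2 := s2) x (.inr y) := by
  rcases x with u | (i | j) <;> exact fun h => h

theorem reduction_to_divisible_by_three
    (H : ∀ (V : Type) [Fintype V] [DecidableEq V] (A B : Finset V)
        (E : V → V → Prop) [DecidableRel E],
        Disjoint A B → A ∪ B = Finset.univ →
        (∀ u v, E u v → (u ∈ A ∧ v ∈ B) ∨ (u ∈ B ∧ v ∈ A)) →
        (∀ u v, E u v → ¬ E v u) →
        3 ∣ A.card → 3 ∣ B.card → 3 ≤ A.card → 3 ≤ B.card →
        (∀ u ∈ A, B.card ≤ 3 * OutDeg E u) →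
        (∀ v ∈ B, A.card ≤ 3 * OutDeg E v) →
        HasDirC4 E ∨ IsDStar A B E) :
    ∀ (V : Type) [Fintype V] [DecidableEq V] (A B : Finset V)
      (E : V → V → Prop) [DecidableRel E],
      Disjoint A B → A ∪ B = Finset.univ →
      (∀ u v, E u v → (u ∈ A ∧ v ∈ B) ∨ (u ∈ B ∧ v ∈ A)) →
      (∀ u v, E u v → ¬ E v u) →
      2 ≤ A.card → 2 ≤ B.card → ¬ (3 ∣ A.card ∧ 3 ∣ B.card) →
      (∀ u ∈ A, B.card ≤ 3 * OutDeg E u) →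
      (∀ v ∈ B, A.card ≤ 3 * OutDeg E v) →
      HasDirC4 E := by
  intro V _ _ A B E _ hd hu hbip hanti hA2 hB2 hnot3 hdA hdB
  set m := A.card with hm
  set n := B.card with hn
  set s1 := (3 - m % 3) % 3 with hs1
  set s2 := (3 - n % 3) % 3 with hs2
  set A' : Finset (V ⊕ (Fin s1 ⊕ Fin s2)) :=
    A.image Sum.inl ∪ (univ : Finset (Fin s1)).image (fun i => Sum.inr (Sum.inl i)) with hA'
  set B' : Finset (V ⊕ (Fin s1 ⊕ Fin s2)) :=
    B.image Sum.inl ∪ (univ : Finset (Fin s2)).image (fun j => Sum.inr (Sum.inr j)) with hB'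
  have hA'inl : ∀ v : V, Sum.inl v ∈ A' ↔ v ∈ A := by intro v; simp [hA']
  have hB'inl : ∀ v : V, Sum.inl v ∈ B' ↔ v ∈ B := by intro v; simp [hB']
  have hA'new : ∀ i : Fin s1, (Sum.inr (Sum.inl i) : V ⊕ (Fin s1 ⊕ Fin s2)) ∈ A' := by
    intro i; simp [hA']
  have hB'new : ∀ j : Fin s2, (Sum.inr (Sum.inr j) : V ⊕ (Fin s1 ⊕ Fin s2)) ∈ B' := by
    intro j; simp [hB']
  have hA'notB : ∀ j : Fin s2, (Sum.inr (Sum.inr j) : V ⊕ (Fin s1 ⊕ Fin s2)) ∉ A' := by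
    intro j; simp [hA']
  have hB'notA : ∀ i : Fin s1, (Sum.inr (Sum.inl i) : V ⊕ (Fin s1 ⊕ Fin s2)) ∉ B' := by
    intro i; simp [hB']
  have hcardA' : A'.card = m + s1 := by
    rw [hA', card_union_of_disjoint (by simp [Finset.disjoint_left]),
      card_image_of_injective _ Sum.inl_injective,
      card_image_of_injective _ (fun a b h => by simpa using h)]
    simp [hm]
  have hcardB' : B'.card = n + s2 := by
    rw [hB', card_union_of_disjoint (by simp [Finset.disjoint_left]),
      card_image_of_injective _ Sum.inl_injective,
      card_image_of_injective _ (fun a b h => by simpa using h)]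
    simp [hn]
  have key := H (V ⊕ (Fin s1 ⊕ Fin s2)) A' B' (ExtE A B E)
    (by -- disjoint
      rw [Finset.disjoint_left]
      rintro (v | (i | j)) hx hy
      · exact (Finset.disjoint_left.1 hd) ((hA'inl v).1 hx) ((hB'inl v).1 hy)
      · exact hB'notA i hy
      · exact hA'notB j hx)
    (by -- union
      ext x; simp only [mem_union, mem_univ, iff_true]
      rcases x with v | (i | j)
      · have hv : v ∈ A ∪ B := hu ▸ mem_univ v
        rcases mem_union.1 hv with h | h
        · exact Or.inl ((hA'inl v).2 h)
        · exact Or.inr ((hB'inl v).2 h)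
      · exact Or.inl (hA'new i)
      · exact Or.inr (hB'new j))
    (by -- bipartite
      rintro (u | (i | j)) (v | (k | l)) h
      · rcases hbip u v h with ⟨h1, h2⟩ | ⟨h1, h2⟩
        · exact Or.inl ⟨(hA'inl u).2 h1, (hB'inl v).2 h2⟩
        · exact Or.inr ⟨(hB'inl u).2 h1, (hA'inl v).2 h2⟩
      · exact h.elim
      · exact h.elim
      · exact Or.inl ⟨hA'new i, (hB'inl v).2 h⟩
      · exact h.elim
      · exact h.elim
      · exact Or.inr ⟨hB'new j, (hA'inl v).2 h⟩
      · exact h.elim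
      · exact h.elim)
    (by -- antisymmetric
      rintro (u | (i | j)) (v | (k | l)) h h' <;>
        first | exact hanti u v h h' | exact h | exact h')
    (by rw [hcardA']; omega)
    (by rw [hcardB']; omega)
    (by rw [hcardA']; omega)
    (by rw [hcardB']; omega)
    (by -- out-degree on A'
      rintro (u | (i | j)) hx
      · have hu' := (hA'inl u).1 hx
        have hfil : (univ.filter fun w => ExtE A B E (s1 := s1) (s2 := s2) (Sum.inl u) w)
            = (univ.filter fun w => E u w).image Sum.inl := by
          ext w; rcases w with v | (k | l) <;> simp
        have : OutDeg (ExtE A B E (s1 := s1) (s2 := s2)) (Sum.inl u) = OutDeg E u := by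
          rw [OutDeg, hfil, card_image_of_injective _ Sum.inl_injective, OutDeg]
        rw [this, hcardB']
        have := hdA u hu'
        omega
      · have hfil : (univ.filter fun w => ExtE A B E (s1 := s1) (s2 := s2) (Sum.inr (Sum.inl i)) w)
            = B.image Sum.inl := by
          ext w; rcases w with v | (k | l) <;> simp
        have : OutDeg (ExtE A B E (s1 := s1) (s2 := s2)) (Sum.inr (Sum.inl i)) = n := by
          rw [OutDeg, hfil, card_image_of_injective _ Sum.inl_injective]
        rw [this, hcardB']
        omega
      · exact absurd hx (hA'notB j))
    (by -- out-degree on B'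
      rintro (u | (i | j)) hx
      · have hu' := (hB'inl u).1 hx
        have hfil : (univ.filter fun w => ExtE A B E (s1 := s1) (s2 := s2) (Sum.inl u) w)
            = (univ.filter fun w => E u w).image Sum.inl := by
          ext w; rcases w with v | (k | l) <;> simp
        have : OutDeg (ExtE A B E (s1 := s1) (s2 := s2)) (Sum.inl u) = OutDeg E u := by
          rw [OutDeg, hfil, card_image_of_injective _ Sum.inl_injective, OutDeg]
        rw [this, hcardA']
        have := hdB u hu'
        omega
      · exact absurd hx (hB'notA i)
      · have hfil : (univ.filter fun w => ExtE A B E (s1 := s1) (s2 := s2) (Sum.inr (Sum.inr j)) w)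
            = A.image Sum.inl := by
          ext w; rcases w with v | (k | l) <;> simp
        have : OutDeg (ExtE A B E (s1 := s1) (s2 := s2)) (Sum.inr (Sum.inr j)) = m := by
          rw [OutDeg, hfil, card_image_of_injective _ Sum.inl_injective]
        rw [this, hcardA']
        omega)
  rcases key with hC4 | hDS
  · -- extract the C4 back into V
    obtain ⟨a, b, c, d, hab, hac, had, hbc, hbd, hcd, e1, e2, e3, e4⟩ := hC4
    rcases d with d | x
    swap; · exact absurd e3 (extE_to_inr A B E c x)
    rcases c with c | x
    swap; · exact absurd e2 (extE_to_inr A B E b x)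
    rcases b with b | x
    swap; · exact absurd e1 (extE_to_inr A B E a x)
    rcases a with a | x
    swap; · exact absurd e4 (extE_to_inr A B E _ x)
    exact ⟨a, b, c, d, fun h => hab (by rw [h]), fun h => hac (by rw [h]),
      fun h => had (by rw [h]), fun h => hbc (by rw [h]), fun h => hbd (by rw [h]),
      fun h => hcd (by rw [h]), e1, e2, e3, e4⟩
  · -- D* case is impossible: some new vertex exists and has in-degree 0 in D*
    obtain ⟨M, N, hMd, hNd, hMA, hNB, hMcard, hNcard, hE⟩ := hDS
    have hs12 : s1 ≠ 0 ∨ s2 ≠ 0 := by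
      by_contra h
      push_neg at h
      exact hnot3 ⟨by omega, by omega⟩
    rcases hs12 with h1 | h2
    · set x : V ⊕ (Fin s1 ⊕ Fin s2) := Sum.inr (Sum.inl ⟨0, Nat.pos_of_ne_zero h1⟩) with hx
      have hxA : x ∈ M 0 ∨ x ∈ M 1 ∨ x ∈ M 2 := by
        have := hA'new ⟨0, Nat.pos_of_ne_zero h1⟩
        rw [← hMA] at this
        simpa [mem_union, or_assoc] using this
      obtain ⟨i, hxi⟩ : ∃ i : ZMod 3, x ∈ M i := by
        rcases hxA with h | h | h
        exacts [⟨0, h⟩, ⟨1, h⟩, ⟨2, h⟩]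
      have hNne : (N (i - 1)).Nonempty := by
        rw [← card_pos]
        have := hNcard (i - 1)
        rw [hcardB'] at this
        omega
      obtain ⟨y, hy⟩ := hNne
      have : ExtE A B E y x := (hE y x).2 ⟨i - 1, Or.inr ⟨hy, by rwa [sub_add_cancel]⟩⟩
      exact absurd this (extE_to_inr A B E y _)
    · set x : V ⊕ (Fin s1 ⊕ Fin s2) := Sum.inr (Sum.inr ⟨0, Nat.pos_of_ne_zero h2⟩) with hx
      have hxB : x ∈ N 0 ∨ x ∈ N 1 ∨ x ∈ N 2 := by
        have := hB'new ⟨0, Nat.pos_of_ne_zero h2⟩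
        rw [← hNB] at this
        simpa [mem_union, or_assoc] using this
      obtain ⟨i, hxi⟩ : ∃ i : ZMod 3, x ∈ N i := by
        rcases hxB with h | h | h
        exacts [⟨0, h⟩, ⟨1, h⟩, ⟨2, h⟩]
      have hMne : (M i).Nonempty := by
        rw [← card_pos]
        have := hMcard i
        rw [hcardA'] at this
        omega
      obtain ⟨y, hy⟩ := hMne
      have : ExtE A B E y x := (hE y x).2 ⟨i, Or.inl ⟨hy, hxi⟩⟩
      exact absurd this (extE_to_inr A B E y _)
end

section
/- In an edge-colored graph G^c with no rainbow C4, with fixed edge xy, color neighborhoods A1 ⊆ N(y)\{x} and B1 ⊆ N(x)\{y} (edges to them rainbow from y resp. x), define the oriented bipartite graph D on A1 ∪ B1: for x_i ∈ A1, y_j ∈ B1 with x_i y_j ∈ E(G), C(x_i y_j) ≠ C(xy), and C(x y_j) ≠ C(y x_i), put arc x_i → y_j if C(x_i y_j) = C(x y_j), and arc y_j → x_i if C(x_i y_j) = C(y x_i). Then D contains no directed cycle of length 4. -/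
open Finset

/-- The edge-colored graph `(G, c)` contains a rainbow cycle of length 4:
four distinct vertices forming a 4-cycle whose edges have pairwise distinct colors. -/
def HasRainbowC4 {V : Type*} {α : Type*} (G : SimpleGraph V) (c : V → V → α) : Prop :=
  ∃ a b d e : V, a ≠ b ∧ a ≠ d ∧ a ≠ e ∧ b ≠ d ∧ b ≠ e ∧ d ≠ e ∧
    G.Adj a b ∧ G.Adj b d ∧ G.Adj d e ∧ G.Adj e a ∧
    c a b ≠ c b d ∧ c a b ≠ c d e ∧ c a b ≠ c e a ∧
    c b d ≠ c d e ∧ c b d ≠ c e a ∧ c d e ≠ c e a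

/-- The color degree of `v`: the number of distinct colors on edges incident with `v`. -/
def ColorDeg {V : Type*} [Fintype V] [DecidableEq V] (G : SimpleGraph V)
    [DecidableRel G.Adj] (c : V → V → ℕ) (v : V) : ℕ :=
  ((G.neighborFinset v).image fun w => c v w).card

theorem constructed_digraph_has_no_directed_C4 {V : Type*} [Fintype V] [DecidableEq V]
    (G : SimpleGraph V) (c : V → V → ℕ) (hsym : ∀ u v, c u v = c v u)
    (hnr : ¬ HasRainbowC4 G c)
    (x y : V) (hxy : G.Adj x y)
    (A1 B1 : Finset V) (hdisj : Disjoint A1 B1)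
    (hA1 : ∀ a ∈ A1, G.Adj y a) (hxA1 : x ∉ A1)
    (hA1rainbow : ∀ a ∈ A1, ∀ b ∈ A1, a ≠ b → c y a ≠ c y b)
    (hB1 : ∀ b ∈ B1, G.Adj x b) (hyB1 : y ∉ B1)
    (hB1rainbow : ∀ a ∈ B1, ∀ b ∈ B1, a ≠ b → c x a ≠ c x b)
    (E : V → V → Prop)
    (hE : ∀ a b, E a b ↔
      (a ∈ A1 ∧ b ∈ B1 ∧ G.Adj a b ∧ c a b ≠ c x y ∧ c x b ≠ c y a ∧ c a b = c x b) ∨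
      (a ∈ B1 ∧ b ∈ A1 ∧ G.Adj a b ∧ c a b ≠ c x y ∧ c x a ≠ c y b ∧ c a b = c y b)) :
    ¬ HasDirC4 E := by
  have key : ∀ a b d e : V, a ≠ b → a ≠ d → a ≠ e → b ≠ d → b ≠ e → d ≠ e →
      E a b → E b d → E d e → E e a → a ∈ A1 → False := by
    intro a b d e hab had hae hbd hbe hde e1 e2 e3 e4 haA
    have hdl := Finset.disjoint_left.mp hdisj
    rcases (hE a b).mp e1 with ⟨_, hbB, adj1, _, hne1, hc1⟩ | ⟨haB, _, _, _, _, _⟩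
    · rcases (hE b d).mp e2 with ⟨hbA, _, _, _, _, _⟩ | ⟨_, hdA, adj2, _, hne2, hc2⟩
      · exact absurd hbB (Finset.disjoint_right.mp hdisj.symm hbA)
      · rcases (hE d e).mp e3 with ⟨_, heB, adj3, _, hne3, hc3⟩ | ⟨hdB, _, _, _, _, _⟩
        · rcases (hE e a).mp e4 with ⟨heA, _, _, _, _, _⟩ | ⟨_, _, adj4, _, hne4, hc4⟩
          · exact absurd heB (Finset.disjoint_right.mp hdisj.symm heA)
          · apply hnr
            refine ⟨a, b, d, e, hab, had, hae, hbd, hbe, hde,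
              adj1, adj2, adj3, adj4, ?_, ?_, ?_, ?_, ?_, ?_⟩
            · rw [hc1, hc2]; exact hne2
            · rw [hc1, hc3]; exact hB1rainbow b hbB e heB hbe
            · rw [hc1, hc4]; exact hne1
            · rw [hc2, hc3]; exact fun h => hne3 h.symm
            · rw [hc2, hc4]; exact hA1rainbow d hdA a haA (fun h => had h.symm)
            · rw [hc3, hc4]; exact hne4
        · exact absurd hdB (hdl hdA)
    · exact absurd haB (hdl haA)
  rintro ⟨a, b, d, e, hab, had, hae, hbd, hbe, hde, e1, e2, e3, e4⟩
  rcases (hE a b).mp e1 with ⟨haA, _⟩ | ⟨_, hbA, _⟩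
  · exact key a b d e hab had hae hbd hbe hde e1 e2 e3 e4 haA
  · exact key b d e a hbd hbe hab.symm hde had.symm hae.symm e2 e3 e4 e1 hbA
end
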